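/- For positive integers l, m, n, the determinant of the l×l matrix whose (i,j) entry is the binomial coefficient C(m+n, m+i−j) equals Π_{i=1}^{l} (m+n+i−1)!·(i−1)! / ((m+i−1)!·(n+i−1)!). In particular, this determinant is nonzero. -/

import Mathlib

open Matrix Finset Equiv

namespace S6

def ent (m n i j : ℕ) : ℚ := if j ≤ m + i then ((m + n).choose (m + i - j) : ℚ) else 0

def Mat (l m n : ℕ) : Matrix (Fin l) (Fin l) ℚ := Matrix.of fun i j : Fin l => ent m n (i : ℕ) (j : ℕ)

def term (m n j : ℕ) : ℚ :=
  ((m + n + j).factorial * j.factorial : ℚ) / ((m + j).factorial * (n + j).factorial)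

def F (l m n : ℕ) : ℚ := ∏ i ∈ Finset.range l, term m n i

lemma fact_ne (a : ℕ) : ((a.factorial : ℚ)) ≠ 0 := by
  exact_mod_cast a.factorial_ne_zero

lemma fact_pos (a : ℕ) : (0:ℚ) < (a.factorial : ℚ) := by
  exact_mod_cast a.factorial_pos

lemma term_pos (m n j : ℕ) : 0 < term m n j := by
  unfold term
  positivity

lemma F_pos (l m n : ℕ) : 0 < F l m n := Finset.prod_pos fun i _ => term_pos m n i

lemma F_succ (l m n : ℕ) : F (l + 1) m n = F l m n * term m n l := Finset.prod_range_succ _ _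

lemma fact_cast_succ (a : ℕ) : ((a+1).factorial : ℚ) = (a + 1) * (a.factorial) := by
  rw [Nat.factorial_succ]; push_cast; ring

lemma ent_congr {m n m' n' i j i' j' : ℕ} (h1 : m + n = m' + n')
    (h2 : (j ≤ m + i) ↔ (j' ≤ m' + i')) (h3 : j ≤ m + i → m + i - j = m' + i' - j') :
    ent m n i j = ent m' n' i' j' := by
  unfold ent
  by_cases h : j ≤ m + i
  · rw [if_pos h, if_pos (h2.mp h), h1, h3 h]
  · rw [if_neg h, if_neg (fun hc => h (h2.mpr hc))]

lemma tele (a : ℕ) : ∀ L : ℕ, ∏ i ∈ range L, ((a + 1 + i : ℚ) / (a + 2 + i)) = (a + 1) / (a + 1 + L) := by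
  intro L
  induction L with
  | zero => rw [prod_range_zero, Nat.cast_zero, add_zero, div_self (by positivity)]
  | succ L ih =>
      rw [prod_range_succ, ih, div_mul_div_comm,
        div_eq_div_iff (by positivity) (by positivity)]
      push_cast
      ring

lemma shift1 (m' n' L : ℕ) :
    F L m' (n'+2) = F L (m'+1) (n'+1) * ∏ i ∈ range L, ((m'+1+i : ℚ)/(n'+2+i)) := by
  rw [F, F, ← prod_mul_distrib]
  refine prod_congr rfl fun i _ => ?_
  unfold term
  have h3 : m' + (n'+2) = m' + 1 + (n'+1) := by ring
  have e1 : ((m'+1+i).factorial : ℚ) = (m'+1+i) * (m'+i).factorial := by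
    rw [show m'+1+i = (m'+i)+1 by ring, fact_cast_succ]; push_cast; ring
  have e2 : ((n'+2+i).factorial : ℚ) = (n'+2+i) * (n'+1+i).factorial := by
    rw [show n'+2+i = (n'+1+i)+1 by ring, fact_cast_succ]; push_cast; ring
  rw [h3, e1, e2]
  have n1 := fact_ne (m'+i)
  have n2 := fact_ne (n'+1+i)
  have n3 : ((n':ℚ)+2+i) ≠ 0 := by positivity
  have n4 : ((m':ℚ)+1+i) ≠ 0 := by positivity
  field_simp

lemma shift2 (m' n' L : ℕ) :
    F L (m'+2) n' = F L (m'+1) (n'+1) * ∏ i ∈ range L, ((n'+1+i : ℚ)/(m'+2+i)) := by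
  rw [F, F, ← prod_mul_distrib]
  refine prod_congr rfl fun i _ => ?_
  unfold term
  have h3 : m' + 2 + n' = m' + 1 + (n'+1) := by ring
  have e1 : ((m'+2+i).factorial : ℚ) = (m'+2+i) * (m'+1+i).factorial := by
    rw [show m'+2+i = (m'+1+i)+1 by ring, fact_cast_succ]; push_cast; ring
  have e2 : ((n'+1+i).factorial : ℚ) = (n'+1+i) * (n'+i).factorial := by
    rw [show n'+1+i = (n'+i)+1 by ring, fact_cast_succ]; push_cast; ring
  rw [h3, e1, e2]
  have n1 := fact_ne (m'+1+i)
  have n2 := fact_ne (n'+i)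
  have n3 : ((n':ℚ)+1+i) ≠ 0 := by positivity
  have n4 : ((m':ℚ)+2+i) ≠ 0 := by positivity
  field_simp

lemma cross (m' n' k : ℕ) :
    F (k+1) m' (n'+2) * F (k+1) (m'+2) n'
      = F (k+1) (m'+1) (n'+1) * F (k+1) (m'+1) (n'+1)
        * ((m'+1) * (n'+1) / ((m'+2+k) * (n'+2+k))) := by
  rw [shift1, shift2]
  have h : (∏ i ∈ range (k+1), ((m'+1+i : ℚ)/(n'+2+i)))
      * (∏ i ∈ range (k+1), ((n'+1+i : ℚ)/(m'+2+i)))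
      = (∏ i ∈ range (k+1), ((m'+1+i : ℚ)/(m'+2+i)))
      * (∏ i ∈ range (k+1), ((n'+1+i : ℚ)/(n'+2+i))) := by
    rw [← prod_mul_distrib, ← prod_mul_distrib]
    refine prod_congr rfl fun i _ => by ring
  have t1 := tele m' (k+1)
  have t2 := tele n' (k+1)
  push_cast at t1 t2
  calc F (k+1) (m'+1) (n'+1) * (∏ i ∈ range (k+1), ((m'+1+i : ℚ)/(n'+2+i)))
      * (F (k+1) (m'+1) (n'+1) * ∏ i ∈ range (k+1), ((n'+1+i : ℚ)/(m'+2+i)))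
      = F (k+1) (m'+1) (n'+1) * F (k+1) (m'+1) (n'+1)
        * ((∏ i ∈ range (k+1), ((m'+1+i : ℚ)/(n'+2+i)))
          * (∏ i ∈ range (k+1), ((n'+1+i : ℚ)/(m'+2+i)))) := by ring
    _ = _ := by
        rw [h, t1, t2]
        have p1 : ((m':ℚ)+1+(↑k+1)) ≠ 0 := by positivity
        have p2 : ((n':ℚ)+1+(↑k+1)) ≠ 0 := by positivity
        have p3 : ((m':ℚ)+2+↑k) ≠ 0 := by positivity
        have p4 : ((n':ℚ)+2+↑k) ≠ 0 := by positivity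
        field_simp
        ring

lemma tstep (m' n' k : ℕ) :
    term (m'+1) (n'+1) (k+1)
      = term (m'+1) (n'+1) k * (1 - (m'+1) * (n'+1) / ((m'+2+k) * (n'+2+k)) : ℚ) := by
  unfold term
  have e1 : ((m'+1+(n'+1)+(k+1)).factorial : ℚ) = (m'+n'+k+3) * (m'+1+(n'+1)+k).factorial := by
    rw [show m'+1+(n'+1)+(k+1) = (m'+1+(n'+1)+k)+1 by ring, fact_cast_succ]; push_cast; ring
  have e2 : ((k+1).factorial : ℚ) = (k+1) * k.factorial := by
    rw [fact_cast_succ]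
  have e3 : ((m'+1+(k+1)).factorial : ℚ) = (m'+k+2) * (m'+1+k).factorial := by
    rw [show m'+1+(k+1) = (m'+1+k)+1 by ring, fact_cast_succ]; push_cast; ring
  have e4 : ((n'+1+(k+1)).factorial : ℚ) = (n'+k+2) * (n'+1+k).factorial := by
    rw [show n'+1+(k+1) = (n'+1+k)+1 by ring, fact_cast_succ]; push_cast; ring
  rw [e1, e2, e3, e4]
  have n1 := fact_ne (m'+1+(n'+1)+k)
  have n2 := fact_ne k
  have n3 := fact_ne (m'+1+k)
  have n4 := fact_ne (n'+1+k)
  have n5 : ((m':ℚ)+k+2) ≠ 0 := by positivity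
  have n6 : ((n':ℚ)+k+2) ≠ 0 := by positivity
  have n7 : ((m':ℚ)+2+k) ≠ 0 := by positivity
  have n8 : ((n':ℚ)+2+k) ≠ 0 := by positivity
  field_simp
  ring

lemma key (k m' n' : ℕ) :
    F (k+2) (m'+1) (n'+1) * F k (m'+1) (n'+1)
      = F (k+1) (m'+1) (n'+1) * F (k+1) (m'+1) (n'+1)
        - F (k+1) m' (n'+2) * F (k+1) (m'+2) n' := by
  have h1 : F (k+2) (m'+1) (n'+1) = F (k+1) (m'+1) (n'+1) * term (m'+1) (n'+1) (k+1) :=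
    F_succ _ _ _
  have h2 : F (k+1) (m'+1) (n'+1) = F k (m'+1) (n'+1) * term (m'+1) (n'+1) k :=
    F_succ _ _ _
  rw [cross, h1, tstep, h2]
  ring


def f0fun (k : ℕ) : Fin 1 ⊕ Fin k → Fin (k + 1)
  | .inl _ => ⟨0, Nat.succ_pos k⟩
  | .inr i => ⟨(i : ℕ) + 1, Nat.succ_lt_succ i.isLt⟩

def f0inv (k : ℕ) (j : Fin (k + 1)) : Fin 1 ⊕ Fin k :=
  if h : (j : ℕ) = 0 then .inl 0 else .inr ⟨(j : ℕ) - 1, by omega⟩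

def f0 (k : ℕ) : (Fin 1 ⊕ Fin k) ≃ Fin (k + 1) where
  toFun := f0fun k
  invFun := f0inv k
  left_inv := by
    rintro (r | i)
    · show f0inv k ⟨0, _⟩ = _
      unfold f0inv
      rw [dif_pos rfl]
      exact congrArg Sum.inl (Subsingleton.elim _ _)
    · show f0inv k ⟨(i : ℕ) + 1, _⟩ = _
      unfold f0inv
      rw [dif_neg (by simp)]
      simp
  right_inv := by
    intro j
    unfold f0inv
    by_cases h : (j : ℕ) = 0
    · rw [dif_pos h]
      exact Fin.ext h.symm
    · rw [dif_neg h]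
      show (⟨(j : ℕ) - 1 + 1, _⟩ : Fin (k+1)) = j
      exact Fin.ext (by simp; omega)

def f1fun (k : ℕ) : Fin 1 ⊕ Fin k → Fin (k + 1)
  | .inl _ => ⟨k, Nat.lt_succ_self k⟩
  | .inr i => ⟨(i : ℕ), Nat.lt_succ_of_lt i.isLt⟩

def f1inv (k : ℕ) (j : Fin (k + 1)) : Fin 1 ⊕ Fin k :=
  if h : (j : ℕ) = k then .inl 0 else .inr ⟨(j : ℕ), by omega⟩

def f1 (k : ℕ) : (Fin 1 ⊕ Fin k) ≃ Fin (k + 1) where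
  toFun := f1fun k
  invFun := f1inv k
  left_inv := by
    rintro (r | i)
    · show f1inv k ⟨k, _⟩ = _
      unfold f1inv
      rw [dif_pos rfl]
      exact congrArg Sum.inl (Subsingleton.elim _ _)
    · show f1inv k ⟨(i : ℕ), _⟩ = _
      unfold f1inv
      have hi := i.isLt
      rw [dif_neg (by simp; omega)]
  right_inv := by
    intro j
    unfold f1inv
    by_cases h : (j : ℕ) = k
    · rw [dif_pos h]
      exact Fin.ext h.symm
    · rw [dif_neg h]
      rfl

def e2fun (k : ℕ) : Fin 2 ⊕ Fin k → Fin (k + 2)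
  | .inl r => if r = 0 then ⟨0, Nat.succ_pos _⟩ else ⟨k + 1, Nat.lt_succ_self _⟩
  | .inr i => ⟨(i : ℕ) + 1, Nat.succ_lt_succ (Nat.lt_succ_of_lt i.isLt)⟩

def e2inv (k : ℕ) (j : Fin (k + 2)) : Fin 2 ⊕ Fin k :=
  if h : (j : ℕ) = 0 then .inl 0
  else if h2 : (j : ℕ) = k + 1 then .inl 1
  else .inr ⟨(j : ℕ) - 1, by omega⟩

def e2 (k : ℕ) : (Fin 2 ⊕ Fin k) ≃ Fin (k + 2) where
  toFun := e2fun k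
  invFun := e2inv k
  left_inv := by
    rintro (r | i)
    · fin_cases r
      · show e2inv k (e2fun k (Sum.inl 0)) = Sum.inl 0
        rw [show e2fun k (Sum.inl 0) = ⟨0, Nat.succ_pos _⟩ from rfl]
        unfold e2inv
        rw [dif_pos rfl]
      · show e2inv k (e2fun k (Sum.inl 1)) = Sum.inl 1
        rw [show e2fun k (Sum.inl 1) = ⟨k + 1, Nat.lt_succ_self _⟩ from rfl]
        unfold e2inv
        rw [dif_neg (by simp), dif_pos rfl]
    · show e2inv k ⟨(i : ℕ) + 1, _⟩ = _
      unfold e2inv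
      have hi := i.isLt
      rw [dif_neg (by simp), dif_neg (by simp; omega)]
      simp
  right_inv := by
    intro j
    unfold e2inv
    by_cases h : (j : ℕ) = 0
    · rw [dif_pos h]
      show (⟨0, _⟩ : Fin (k+2)) = j
      exact Fin.ext h.symm
    · rw [dif_neg h]
      by_cases h2 : (j : ℕ) = k + 1
      · rw [dif_pos h2]
        show (⟨k + 1, _⟩ : Fin (k+2)) = j
        exact Fin.ext h2.symm
      · rw [dif_neg h2]
        show (⟨(j : ℕ) - 1 + 1, _⟩ : Fin (k+2)) = j
        exact Fin.ext (by simp; omega)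

@[simp] lemma f0_inl_val (k : ℕ) (r : Fin 1) : ((f0 k (.inl r)) : ℕ) = 0 := rfl
@[simp] lemma f0_inr_val (k : ℕ) (i : Fin k) : ((f0 k (.inr i)) : ℕ) = (i : ℕ) + 1 := rfl
@[simp] lemma f1_inl_val (k : ℕ) (r : Fin 1) : ((f1 k (.inl r)) : ℕ) = k := rfl
@[simp] lemma f1_inr_val (k : ℕ) (i : Fin k) : ((f1 k (.inr i)) : ℕ) = (i : ℕ) := rfl
@[simp] lemma e2_inl0_val (k : ℕ) : ((e2 k (.inl 0)) : ℕ) = 0 := rfl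
@[simp] lemma e2_inl1_val (k : ℕ) : ((e2 k (.inl 1)) : ℕ) = k + 1 := rfl
@[simp] lemma e2_inr_val (k : ℕ) (i : Fin k) : ((e2 k (.inr i)) : ℕ) = (i : ℕ) + 1 := rfl

lemma pi_eq (k : ℕ) :
    ((f0 k).permCongr ((f1 k).trans (f0 k).symm) : Equiv.Perm (Fin (k+1)))
      = (finRotate (k+1))⁻¹ := by
  apply Equiv.ext
  intro x
  rw [Equiv.permCongr_apply, Equiv.trans_apply, Equiv.apply_symm_apply,
    Equiv.Perm.eq_inv_iff_eq]
  show finRotate (k+1) (f1 k ((f0 k).symm x)) = x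
  rcases eq_or_ne (x : ℕ) 0 with h | h
  · have : (f0 k).symm x = .inl 0 := dif_pos h
    rw [this]
    have : f1 k (.inl 0) = ⟨k, by omega⟩ := rfl
    rw [this, finRotate_succ_apply]
    apply Fin.ext
    simp [Fin.add_def]
    omega
  · have : (f0 k).symm x = .inr ⟨(x : ℕ) - 1, by omega⟩ := dif_neg h
    rw [this]
    have : f1 k (.inr ⟨(x : ℕ) - 1, by omega⟩) = ⟨(x : ℕ) - 1, by omega⟩ := rfl
    rw [this, finRotate_succ_apply]
    apply Fin.ext
    simp [Fin.add_def]
    rw [Nat.mod_eq_of_lt (by omega)]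
    omega

lemma sign_sigma (k : ℕ) :
    Equiv.Perm.sign ((f1 k).trans (f0 k).symm) = (-1 : ℤˣ)^k := by
  rw [← Equiv.Perm.sign_permCongr (f0 k), pi_eq]
  simp [sign_finRotate]

lemma det_sub_f0f0 (k : ℕ) (X : Matrix (Fin (k+1)) (Fin (k+1)) ℚ) :
    (X.submatrix (f0 k) (f0 k)).det = X.det := Matrix.det_submatrix_equiv_self _ _

lemma det_sub_f1f1 (k : ℕ) (X : Matrix (Fin (k+1)) (Fin (k+1)) ℚ) :
    (X.submatrix (f1 k) (f1 k)).det = X.det := Matrix.det_submatrix_equiv_self _ _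

lemma det_sub_f0f1 (k : ℕ) (X : Matrix (Fin (k+1)) (Fin (k+1)) ℚ) :
    (X.submatrix (f0 k) (f1 k)).det = (-1 : ℚ)^k * X.det := by
  have hX : X.submatrix (f0 k) (f1 k)
      = (X.submatrix (f0 k) (f0 k)).submatrix id ((f1 k).trans (f0 k).symm) := by
    ext p q
    simp [Matrix.submatrix_apply, Equiv.trans_apply, Equiv.apply_symm_apply]
  rw [hX, Matrix.det_permute', sign_sigma, Matrix.det_submatrix_equiv_self]
  push_cast
  ring

lemma det_sub_f1f0 (k : ℕ) (X : Matrix (Fin (k+1)) (Fin (k+1)) ℚ) :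
    (X.submatrix (f1 k) (f0 k)).det = (-1 : ℚ)^k * X.det := by
  have hX : X.submatrix (f1 k) (f0 k)
      = (X.submatrix (f0 k) (f0 k)).submatrix ((f1 k).trans (f0 k).symm) id := by
    ext p q
    simp [Matrix.submatrix_apply, Equiv.trans_apply, Equiv.apply_symm_apply]
  rw [hX, Matrix.det_permute, sign_sigma, Matrix.det_submatrix_equiv_self]
  push_cast
  ring

lemma F_m0 (l n : ℕ) : F l 0 n = 1 := by
  apply Finset.prod_eq_one
  intro i _
  unfold term
  rw [zero_add, zero_add, mul_comm, div_self (by positivity)]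

lemma F_n0 (l m : ℕ) : F l m 0 = 1 := by
  apply Finset.prod_eq_one
  intro i _
  unfold term
  rw [add_zero, zero_add, div_self (by positivity)]

lemma det_Mat_m0 (l n : ℕ) : (Mat l 0 n).det = 1 := by
  rw [Matrix.det_of_lowerTriangular]
  · apply Finset.prod_eq_one
    intro i _
    simp [Mat, ent]
  · intro i j hij
    have : (i : ℕ) < (j : ℕ) := hij
    simp only [Mat, Matrix.of_apply, ent]
    rw [if_neg (by omega)]

lemma det_Mat_n0 (l m : ℕ) : (Mat l m 0).det = 1 := by
  rw [Matrix.det_of_upperTriangular]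
  · apply Finset.prod_eq_one
    intro i _
    simp [Mat, ent]
  · intro i j hij
    have : (j : ℕ) < (i : ℕ) := hij
    simp only [Mat, Matrix.of_apply, ent]
    split_ifs with h
    · rw [Nat.choose_eq_zero_of_lt (by omega), Nat.cast_zero]
    · rfl

lemma det_Mat_one (m n : ℕ) : (Mat 1 m n).det = F 1 m n := by
  rw [Matrix.det_fin_one]
  simp only [Mat, Matrix.of_apply, ent, F]
  rw [prod_range_one]
  unfold term
  rw [if_pos (by omega)]
  rw [show m + (0:Fin 1) - (0:Fin 1) = m by simp]
  rw [Nat.cast_choose ℚ (Nat.le_add_right m n)]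
  simp [Nat.factorial]

lemma border_det {k : ℕ} (D : Matrix (Fin k) (Fin k) ℚ) [Invertible D]
    (a : ℚ) (b c : Fin k → ℚ) :
    (Matrix.fromBlocks (Matrix.of fun _ _ : Fin 1 => a)
        (Matrix.of fun (_ : Fin 1) j => b j)
        (Matrix.of fun i (_ : Fin 1) => c i) D).det
      = D.det * (a - ∑ j, (∑ i, b i * (⅟D) i j) * c j) := by
  rw [Matrix.det_fromBlocks₂₂]
  congr 1
  rw [Matrix.det_fin_one]
  simp [Matrix.sub_apply, Matrix.mul_apply]

lemma schur_entry {k : ℕ} (A : Matrix (Fin 2) (Fin 2) ℚ) (B : Matrix (Fin 2) (Fin k) ℚ)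
    (C : Matrix (Fin k) (Fin 2) ℚ) (D : Matrix (Fin k) (Fin k) ℚ) [Invertible D] (r c : Fin 2) :
    (A - B * ⅟D * C) r c = A r c - ∑ j, (∑ i, B r i * (⅟D) i j) * C j c := by
  simp [Matrix.mul_apply, Matrix.sub_apply]

lemma det_step (k m' n' : ℕ)
    (IH1 : ∀ m n, (Mat (k+1) m n).det = F (k+1) m n)
    (IH0 : ∀ m n, (Mat k m n).det = F k m n) :
    (Mat (k+2) (m'+1) (n'+1)).det = F (k+2) (m'+1) (n'+1) := by
  set G := (Mat (k+2) (m'+1) (n'+1)).submatrix (e2 k) (e2 k) with hGdef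
  set A := G.toBlocks₁₁ with hA
  set B := G.toBlocks₁₂ with hB
  set C := G.toBlocks₂₁ with hC
  set D := G.toBlocks₂₂ with hDdef
  have hG : G = Matrix.fromBlocks A B C D := (Matrix.fromBlocks_toBlocks G).symm
  have hD : D = Mat k (m'+1) (n'+1) := by
    ext i j
    simp only [hDdef, hGdef, Matrix.toBlocks₂₂, Matrix.of_apply, Matrix.submatrix_apply,
      Mat, e2_inr_val]
    exact ent_congr rfl (by omega) (fun _ => by omega)
  have hDdet : D.det = F k (m'+1) (n'+1) := by rw [hD, IH0]
  haveI : Invertible D := D.invertibleOfIsUnitDet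
    (by rw [hDdet]; exact (F_pos k (m'+1) (n'+1)).ne'.isUnit)
  have hXG : (Mat (k+2) (m'+1) (n'+1)).det = G.det :=
    (Matrix.det_submatrix_equiv_self (e2 k) _).symm
  have hGdet : G.det = D.det * ((A - B * ⅟D * C).det) := by
    rw [hG, Matrix.det_fromBlocks₂₂]
  have hE : ∀ r c : Fin 2, D.det * ((A - B * ⅟D * C) r c)
      = (Matrix.fromBlocks (Matrix.of fun _ _ : Fin 1 => A r c)
          (Matrix.of fun (_ : Fin 1) j => B r j)
          (Matrix.of fun i (_ : Fin 1) => C i c) D).det := by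
    intro r c
    rw [schur_entry, border_det]
  have h00 : (Matrix.fromBlocks (Matrix.of fun _ _ : Fin 1 => A 0 0)
      (Matrix.of fun (_ : Fin 1) j => B 0 j)
      (Matrix.of fun i (_ : Fin 1) => C i 0) D)
      = (Mat (k+1) (m'+1) (n'+1)).submatrix (f0 k) (f0 k) := by
    ext p q
    rcases p with p | p <;> rcases q with q | q <;>
      simp only [hA, hB, hC, hDdef, hGdef, Matrix.fromBlocks_apply₁₁, Matrix.fromBlocks_apply₁₂,
        Matrix.fromBlocks_apply₂₁, Matrix.fromBlocks_apply₂₂, Matrix.toBlocks₁₁,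
        Matrix.toBlocks₁₂, Matrix.toBlocks₂₁, Matrix.toBlocks₂₂, Matrix.of_apply,
        Matrix.submatrix_apply, Mat, e2_inl0_val, e2_inl1_val, e2_inr_val, f0_inl_val,
        f0_inr_val, f1_inl_val, f1_inr_val] <;>
      exact ent_congr rfl (by omega) (fun _ => by omega)
  have h11 : (Matrix.fromBlocks (Matrix.of fun _ _ : Fin 1 => A 1 1)
      (Matrix.of fun (_ : Fin 1) j => B 1 j)
      (Matrix.of fun i (_ : Fin 1) => C i 1) D)
      = (Mat (k+1) (m'+1) (n'+1)).submatrix (f1 k) (f1 k) := by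
    ext p q
    rcases p with p | p <;> rcases q with q | q <;>
      simp only [hA, hB, hC, hDdef, hGdef, Matrix.fromBlocks_apply₁₁, Matrix.fromBlocks_apply₁₂,
        Matrix.fromBlocks_apply₂₁, Matrix.fromBlocks_apply₂₂, Matrix.toBlocks₁₁,
        Matrix.toBlocks₁₂, Matrix.toBlocks₂₁, Matrix.toBlocks₂₂, Matrix.of_apply,
        Matrix.submatrix_apply, Mat, e2_inl0_val, e2_inl1_val, e2_inr_val, f0_inl_val,
        f0_inr_val, f1_inl_val, f1_inr_val] <;>
      exact ent_congr rfl (by omega) (fun _ => by omega)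
  have h01 : (Matrix.fromBlocks (Matrix.of fun _ _ : Fin 1 => A 0 1)
      (Matrix.of fun (_ : Fin 1) j => B 0 j)
      (Matrix.of fun i (_ : Fin 1) => C i 1) D)
      = (Mat (k+1) m' (n'+2)).submatrix (f0 k) (f1 k) := by
    ext p q
    rcases p with p | p <;> rcases q with q | q <;>
      simp only [hA, hB, hC, hDdef, hGdef, Matrix.fromBlocks_apply₁₁, Matrix.fromBlocks_apply₁₂,
        Matrix.fromBlocks_apply₂₁, Matrix.fromBlocks_apply₂₂, Matrix.toBlocks₁₁,
        Matrix.toBlocks₁₂, Matrix.toBlocks₂₁, Matrix.toBlocks₂₂, Matrix.of_apply,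
        Matrix.submatrix_apply, Mat, e2_inl0_val, e2_inl1_val, e2_inr_val, f0_inl_val,
        f0_inr_val, f1_inl_val, f1_inr_val] <;>
      exact ent_congr (by omega) (by omega) (fun _ => by omega)
  have h10 : (Matrix.fromBlocks (Matrix.of fun _ _ : Fin 1 => A 1 0)
      (Matrix.of fun (_ : Fin 1) j => B 1 j)
      (Matrix.of fun i (_ : Fin 1) => C i 0) D)
      = (Mat (k+1) (m'+2) n').submatrix (f1 k) (f0 k) := by
    ext p q
    rcases p with p | p <;> rcases q with q | q <;>
      simp only [hA, hB, hC, hDdef, hGdef, Matrix.fromBlocks_apply₁₁, Matrix.fromBlocks_apply₁₂,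
        Matrix.fromBlocks_apply₂₁, Matrix.fromBlocks_apply₂₂, Matrix.toBlocks₁₁,
        Matrix.toBlocks₁₂, Matrix.toBlocks₂₁, Matrix.toBlocks₂₂, Matrix.of_apply,
        Matrix.submatrix_apply, Mat, e2_inl0_val, e2_inl1_val, e2_inr_val, f0_inl_val,
        f0_inr_val, f1_inl_val, f1_inr_val] <;>
      exact ent_congr (by omega) (by omega) (fun _ => by omega)
  have b00 : D.det * ((A - B * ⅟D * C) 0 0) = F (k+1) (m'+1) (n'+1) := by
    rw [hE, h00, det_sub_f0f0, IH1]
  have b11 : D.det * ((A - B * ⅟D * C) 1 1) = F (k+1) (m'+1) (n'+1) := by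
    rw [hE, h11, det_sub_f1f1, IH1]
  have b01 : D.det * ((A - B * ⅟D * C) 0 1) = (-1 : ℚ)^k * F (k+1) m' (n'+2) := by
    rw [hE, h01, det_sub_f0f1, IH1]
  have b10 : D.det * ((A - B * ⅟D * C) 1 0) = (-1 : ℚ)^k * F (k+1) (m'+2) n' := by
    rw [hE, h10, det_sub_f1f0, IH1]
  have hfin : (Mat (k+2) (m'+1) (n'+1)).det * F k (m'+1) (n'+1)
      = F (k+2) (m'+1) (n'+1) * F k (m'+1) (n'+1) := by
    have expand : (Mat (k+2) (m'+1) (n'+1)).det * D.det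
        = (D.det * ((A - B * ⅟D * C) 0 0)) * (D.det * ((A - B * ⅟D * C) 1 1))
          - (D.det * ((A - B * ⅟D * C) 0 1)) * (D.det * ((A - B * ⅟D * C) 1 0)) := by
      rw [hXG, hGdet, Matrix.det_fin_two]
      ring
    have hs : (-1 : ℚ)^k * (-1)^k = 1 := by
      rw [← pow_add, ← two_mul, pow_mul]
      norm_num
    calc (Mat (k+2) (m'+1) (n'+1)).det * F k (m'+1) (n'+1)
        = (Mat (k+2) (m'+1) (n'+1)).det * D.det := by rw [hDdet]
      _ = F (k+2) (m'+1) (n'+1) * F k (m'+1) (n'+1) := by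
          rw [expand, b00, b11, b01, b10]
          linear_combination ((-1 : ℚ) * (key k m' n'))
            + ((-(F (k+1) m' (n'+2) * F (k+1) (m'+2) n')) * hs)
  exact mul_right_cancel₀ (F_pos k (m'+1) (n'+1)).ne' hfin

lemma det_Mat (l : ℕ) : ∀ m n, (Mat l m n).det = F l m n := by
  induction l using Nat.strong_induction_on with
  | _ l IH =>
    match l, IH with
    | 0, _ =>
        intro m n
        rw [Matrix.det_isEmpty]
        simp [F]
    | 1, _ =>
        intro m n
        exact det_Mat_one m n
    | (k+2), IH =>
        intro m n
        rcases m with _ | m'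
        · rw [det_Mat_m0, F_m0]
        · rcases n with _ | n'
          · rw [det_Mat_n0, F_n0]
          · exact det_step k m' n' (fun m n => IH (k+1) (by omega) m n)
              (fun m n => IH k (by omega) m n)

end S6

theorem stmt6 (l m n : ℕ) (hl : 0 < l) (hm : 0 < m) (hn : 0 < n) :
    Matrix.det (Matrix.of fun i j : Fin l =>
        if (j : ℕ) ≤ m + (i : ℕ) then ((m + n).choose (m + (i : ℕ) - (j : ℕ)) : ℚ) else 0) =
      ∏ i ∈ Finset.range l,
        ((m + n + i).factorial * i.factorial : ℚ) /
          ((m + i).factorial * (n + i).factorial) ∧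
    Matrix.det (Matrix.of fun i j : Fin l =>
        if (j : ℕ) ≤ m + (i : ℕ) then ((m + n).choose (m + (i : ℕ) - (j : ℕ)) : ℚ) else 0) ≠ 0 := by
  have hM : (Matrix.of fun i j : Fin l =>
      if (j : ℕ) ≤ m + (i : ℕ) then ((m + n).choose (m + (i : ℕ) - (j : ℕ)) : ℚ) else 0)
      = S6.Mat l m n := rfl
  have hF : S6.F l m n = ∏ i ∈ Finset.range l,
      ((m + n + i).factorial * i.factorial : ℚ) / ((m + i).factorial * (n + i).factorial) := rfl
  constructor
  · rw [hM, S6.det_Mat, hF]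
  · rw [hM, S6.det_Mat]
    exact (S6.F_pos l m n).ne'
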